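/- Let n ≥ 1, p > 1 + 2/n, δ > 1, and fix x₀ ∈ ℝⁿ. Then there exists λ₀ > 0 such that for every 0 < λ ≤ λ₀, every measurable u₀ with 0 ≤ u₀(x) ≤ (λ/2)·G_δ(x − x₀), and all measurable u₁, u₂ : ℝⁿ × [0,∞) → ℝ that are essentially bounded and satisfy 0 ≤ u_i(y,s) ≤ λ·G_{s+δ}(y − x₀) (i = 1,2), the operator Tu(x,t) := ∫_{ℝⁿ} G_t(x − y)u₀(y) dy + ∫₀ᵗ ∫_{ℝⁿ} G_{t−s}(x − y)·u(y,s)^p dy ds satisfies |Tu₁(x,t) − Tu₂(x,t)| ≤ p·λ^{p−1}·K·‖u₁ − u₂‖_{L^∞} for all (x,t), where K = ∫₀^∞ (4π(s+δ))^{−n(p−1)/2} ds < ∞ and p·λ₀^{p−1}·K < 1; in particular T is a contraction on the set S = { u : 0 ≤ u(x,t) ≤ λ G_{t+δ}(x−x₀) } in the L^∞ norm. -/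

import Mathlib

open MeasureTheory Real

/-- The Gaussian heat kernel on `ℝⁿ`: `G_t(x) = (4πt)^{-n/2} exp(-‖x‖²/(4t))`. -/
noncomputable def heatKernel (n : ℕ) (t : ℝ) (x : EuclideanSpace ℝ (Fin n)) : ℝ :=
  (4 * Real.pi * t) ^ (-(n : ℝ) / 2) * Real.exp (-‖x‖ ^ 2 / (4 * t))

/-- The integral operator `T` of the Duhamel formulation:
`Tu(x,t) = ∫ G_t(x-y) u₀(y) dy + ∫₀ᵗ ∫ G_{t-s}(x-y) u(y,s)^p dy ds`. -/
noncomputable def duhamelOp (n : ℕ) (p : ℝ) (u₀ : EuclideanSpace ℝ (Fin n) → ℝ)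
    (u : EuclideanSpace ℝ (Fin n) → ℝ → ℝ) (x : EuclideanSpace ℝ (Fin n)) (t : ℝ) : ℝ :=
  (∫ y, heatKernel n t (x - y) * u₀ y) +
    ∫ s in (0 : ℝ)..t, ∫ y, heatKernel n (t - s) (x - y) * u y s ^ p

/-- The `L^∞` (essential supremum) norm of `u₁ - u₂` over `ℝⁿ × [0,∞)`. -/
noncomputable def linftyDist (n : ℕ) (u₁ u₂ : EuclideanSpace ℝ (Fin n) → ℝ → ℝ) : ℝ :=
  (essSup (fun q : EuclideanSpace ℝ (Fin n) × ℝ => ENNReal.ofReal |u₁ q.1 q.2 - u₂ q.1 q.2|)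
    (MeasureTheory.volume.restrict {q : EuclideanSpace ℝ (Fin n) × ℝ | 0 ≤ q.2})).toReal

section Aux

variable {n : ℕ}

lemma heatKernel_nonneg {t : ℝ} (ht : 0 < t) (z : EuclideanSpace ℝ (Fin n)) :
    0 ≤ heatKernel n t z :=
  mul_nonneg (Real.rpow_nonneg (by positivity) _) (Real.exp_nonneg _)

lemma heatKernel_le {t : ℝ} (ht : 0 < t) (z : EuclideanSpace ℝ (Fin n)) :
    heatKernel n t z ≤ (4 * Real.pi * t) ^ (-(n : ℝ) / 2) := by
  have hc : (0:ℝ) < (4 * Real.pi * t) ^ (-(n : ℝ) / 2) :=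
    Real.rpow_pos_of_pos (by positivity) _
  have h1 : Real.exp (-‖z‖ ^ 2 / (4 * t)) ≤ 1 := by
    rw [Real.exp_le_one_iff]
    exact div_nonpos_iff.mpr (Or.inr ⟨neg_nonpos.mpr (by positivity), by positivity⟩)
  exact mul_le_of_le_one_right hc.le h1

lemma heatKernel_le' {a b : ℝ} (ha : 0 < a) (hab : a ≤ b) (z : EuclideanSpace ℝ (Fin n)) :
    heatKernel n b z ≤ (4 * Real.pi * a) ^ (-(n : ℝ) / 2) := by
  refine (heatKernel_le (lt_of_lt_of_le ha hab) z).trans ?_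
  refine Real.rpow_le_rpow_of_nonpos (by positivity) (by nlinarith [Real.pi_pos]) ?_
  have : (0:ℝ) ≤ (n : ℝ) / 2 := by positivity
  linarith

lemma integrable_gauss {b : ℝ} (hb : 0 < b) :
    Integrable (fun v : EuclideanSpace ℝ (Fin n) => Real.exp (-b * ‖v‖ ^ 2)) := by
  have h := (GaussianFourier.integrable_cexp_neg_mul_sq_norm_add
    (V := EuclideanSpace ℝ (Fin n)) (b := (b : ℂ)) (by simpa using hb) 0 0).norm
  refine h.congr (Filter.Eventually.of_forall fun v => ?_)
  simp only [Complex.norm_exp]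
  rw [Real.exp_eq_exp]
  simp
  left
  rw [← Complex.ofReal_pow, Complex.ofReal_re]

lemma integrable_heatKernel_sub {t : ℝ} (ht : 0 < t) (x : EuclideanSpace ℝ (Fin n)) :
    Integrable (fun y : EuclideanSpace ℝ (Fin n) => heatKernel n t (x - y)) := by
  have hb : (0:ℝ) < 1 / (4 * t) := by positivity
  have h := ((integrable_gauss (n := n) hb).comp_sub_left x).const_mul
    ((4 * Real.pi * t) ^ (-(n : ℝ) / 2))
  refine h.congr (Filter.Eventually.of_forall fun y => ?_)
  unfold heatKernel
  have h2 : -(1 / (4 * t)) * ‖x - y‖ ^ 2 = -‖x - y‖ ^ 2 / (4 * t) := by ring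
  dsimp only
  rw [h2]

lemma integral_heatKernel {t : ℝ} (ht : 0 < t) (x : EuclideanSpace ℝ (Fin n)) :
    ∫ y, heatKernel n t (x - y) = 1 := by
  rw [integral_sub_left_eq_self (heatKernel n t) volume x]
  have hb : (0:ℝ) < 1 / (4 * t) := by positivity
  have h1 : ∫ y : EuclideanSpace ℝ (Fin n), heatKernel n t y
      = (4 * Real.pi * t) ^ (-(n : ℝ) / 2)
        * ∫ y : EuclideanSpace ℝ (Fin n), Real.exp (-(1 / (4 * t)) * ‖y‖ ^ 2) := by
    rw [← integral_const_mul]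
    congr 1 with y
    unfold heatKernel
    congr 1
    ring
  rw [h1, GaussianFourier.integral_rexp_neg_mul_sq_norm hb, finrank_euclideanSpace_fin]
  have h2 : Real.pi / (1 / (4 * t)) = 4 * Real.pi * t := by
    field_simp
  rw [h2, ← Real.rpow_add (by positivity)]
  rw [show -(n : ℝ) / 2 + (n : ℝ) / 2 = 0 by ring, Real.rpow_zero]

lemma abs_rpow_sub_rpow_le {p a b : ℝ} (hp : 1 ≤ p) (ha : 0 ≤ a) (hb : 0 ≤ b) :
    |a ^ p - b ^ p| ≤ p * max a b ^ (p - 1) * |a - b| := by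
  set M := max a b with hM
  have hs : Convex ℝ (Set.Icc (0:ℝ) M) := convex_Icc _ _
  have hderiv : ∀ z ∈ Set.Icc (0:ℝ) M,
      HasDerivWithinAt (fun w : ℝ => w ^ p) (p * z ^ (p - 1)) (Set.Icc 0 M) z :=
    fun z _ => (Real.hasDerivAt_rpow_const (Or.inr hp)).hasDerivWithinAt
  have hbound : ∀ z ∈ Set.Icc (0:ℝ) M, ‖p * z ^ (p - 1)‖ ≤ p * M ^ (p - 1) := by
    intro z hz
    rw [Real.norm_eq_abs, abs_of_nonneg (mul_nonneg (by linarith) (Real.rpow_nonneg hz.1 _))]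
    exact mul_le_mul_of_nonneg_left (Real.rpow_le_rpow hz.1 hz.2 (by linarith)) (by linarith)
  have h := hs.norm_image_sub_le_of_norm_hasDerivWithin_le hderiv hbound
    (Set.mem_Icc.mpr ⟨hb, le_max_right a b⟩) (Set.mem_Icc.mpr ⟨ha, le_max_left a b⟩)
  simpa [Real.norm_eq_abs, mul_assoc] using h

lemma measurable_heatKernel2 :
    Measurable (fun q : ℝ × EuclideanSpace ℝ (Fin n) => heatKernel n q.1 q.2) := by
  apply Measurable.mul
  · exact (measurable_fst.const_mul (4 * Real.pi)).pow measurable_const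
  · exact (((measurable_snd.norm.pow_const 2).neg).div (measurable_fst.const_mul 4)).exp

lemma K_integrable (hn : 1 ≤ n) {p δ : ℝ} (hp : 1 + 2 / (n : ℝ) < p) (hδ : 1 < δ) :
    IntegrableOn (fun s : ℝ => (4 * Real.pi * (s + δ)) ^ (-(n : ℝ) * (p - 1) / 2))
      (Set.Ioi (0 : ℝ)) := by
  have hn0 : (0:ℝ) < n := by exact_mod_cast hn
  have he : -(n : ℝ) * (p - 1) / 2 < -1 := by
    have h2 : 2 / (n : ℝ) < p - 1 := by linarith
    rw [div_lt_iff₀ hn0] at h2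
    nlinarith
  have hδ0 : (0:ℝ) < δ := by linarith
  have h1 : IntegrableOn (fun u : ℝ => u ^ (-(n : ℝ) * (p - 1) / 2)) (Set.Ioi δ) :=
    integrableOn_Ioi_rpow_of_lt he hδ0
  have h2 : IntegrableOn (fun s : ℝ => (s + δ) ^ (-(n : ℝ) * (p - 1) / 2))
      (Set.Ioi (0:ℝ)) := by
    have hmp : MeasurePreserving (fun s : ℝ => s + δ) volume volume :=
      measurePreserving_add_right volume δ
    have hpre : (fun s : ℝ => s + δ) ⁻¹' (Set.Ioi δ) = Set.Ioi 0 := by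
      ext s
      simp [Set.mem_Ioi]
    have hemb : MeasurableEmbedding (fun s : ℝ => s + δ) :=
      (MeasurableEquiv.addRight δ).measurableEmbedding
    have h3 := ((hmp.restrict_preimage (measurableSet_Ioi (a := δ))).integrable_comp_emb
      hemb).mpr h1
    rw [hpre] at h3
    exact h3
  have h4 := h2.const_mul ((4 * Real.pi) ^ (-(n : ℝ) * (p - 1) / 2))
  refine MeasureTheory.IntegrableOn.congr_fun h4 (fun s hs => ?_) measurableSet_Ioi
  rw [← Real.mul_rpow (by positivity) (by simp only [Set.mem_Ioi] at hs; linarith)]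

end Aux

set_option maxHeartbeats 2000000 in
/-- For `p > 1 + 2/n` and `δ > 1`, with `K = ∫₀^∞ (4π(s+δ))^{-n(p-1)/2} ds < ∞`, there is
`λ₀ > 0` with `p λ₀^{p-1} K < 1` such that for all `0 < λ ≤ λ₀` the operator `T` is a
contraction on `S = {u : 0 ≤ u(x,t) ≤ λ G_{t+δ}(x - x₀)}` in the `L^∞` norm:
`|Tu₁(x,t) - Tu₂(x,t)| ≤ p λ^{p-1} K ‖u₁ - u₂‖_{L^∞}`. -/
theorem duhamelOp_contraction (n : ℕ) (hn : 1 ≤ n) (p δ : ℝ)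
    (hp : 1 + 2 / (n : ℝ) < p) (hδ : 1 < δ) (x₀ : EuclideanSpace ℝ (Fin n)) :
    IntegrableOn (fun s : ℝ => (4 * Real.pi * (s + δ)) ^ (-(n : ℝ) * (p - 1) / 2))
      (Set.Ioi (0 : ℝ)) ∧
    ∃ lam₀ : ℝ, 0 < lam₀ ∧
      p * lam₀ ^ (p - 1) *
        (∫ s in Set.Ioi (0 : ℝ), (4 * Real.pi * (s + δ)) ^ (-(n : ℝ) * (p - 1) / 2)) < 1 ∧
      ∀ lam : ℝ, 0 < lam → lam ≤ lam₀ →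
        ∀ u₀ : EuclideanSpace ℝ (Fin n) → ℝ, Measurable u₀ →
          (∀ x, 0 ≤ u₀ x ∧ u₀ x ≤ lam / 2 * heatKernel n δ (x - x₀)) →
          ∀ u₁ u₂ : EuclideanSpace ℝ (Fin n) → ℝ → ℝ,
            Measurable (fun q : EuclideanSpace ℝ (Fin n) × ℝ => u₁ q.1 q.2) →
            Measurable (fun q : EuclideanSpace ℝ (Fin n) × ℝ => u₂ q.1 q.2) →
            (∀ y, ∀ s : ℝ, 0 ≤ s →
              0 ≤ u₁ y s ∧ u₁ y s ≤ lam * heatKernel n (s + δ) (y - x₀)) →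
            (∀ y, ∀ s : ℝ, 0 ≤ s →
              0 ≤ u₂ y s ∧ u₂ y s ≤ lam * heatKernel n (s + δ) (y - x₀)) →
            ∀ x, ∀ t : ℝ, 0 ≤ t →
              |duhamelOp n p u₀ u₁ x t - duhamelOp n p u₀ u₂ x t| ≤
                p * lam ^ (p - 1) *
                  (∫ s in Set.Ioi (0 : ℝ),
                    (4 * Real.pi * (s + δ)) ^ (-(n : ℝ) * (p - 1) / 2)) *
                  linftyDist n u₁ u₂ := by
  have hπ := Real.pi_pos
  have hn0 : (0:ℝ) < n := by exact_mod_cast hn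
  have hp1 : 1 < p := by
    have h2 : 0 < 2 / (n:ℝ) := by positivity
    linarith
  have hδ0 : (0:ℝ) < δ := by linarith
  have hKint := K_integrable hn hp hδ
  set K : ℝ := ∫ s in Set.Ioi (0:ℝ), (4 * Real.pi * (s + δ)) ^ (-(n : ℝ) * (p - 1) / 2)
    with hK_def
  have hK0 : 0 ≤ K := by
    refine setIntegral_nonneg measurableSet_Ioi fun s hs => Real.rpow_nonneg ?_ _
    rw [Set.mem_Ioi] at hs
    nlinarith
  set lam₀ : ℝ := min 1 ((p * K + 1)⁻¹ ^ (1 / (p - 1))) with hlam₀_def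
  have hcpos : (0:ℝ) < (p * K + 1)⁻¹ := by positivity
  have hlam₀pos : 0 < lam₀ := lt_min one_pos (Real.rpow_pos_of_pos hcpos _)
  have hlam₀le : lam₀ ^ (p - 1) ≤ (p * K + 1)⁻¹ := by
    calc lam₀ ^ (p - 1) ≤ ((p * K + 1)⁻¹ ^ (1 / (p - 1))) ^ (p - 1) :=
          Real.rpow_le_rpow hlam₀pos.le (min_le_right _ _) (by linarith)
      _ = (p * K + 1)⁻¹ := by
          rw [← Real.rpow_mul hcpos.le, one_div,
            inv_mul_cancel₀ (by linarith : p - 1 ≠ 0), Real.rpow_one]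
  refine ⟨hKint, lam₀, hlam₀pos, ?_, ?_⟩
  · calc p * lam₀ ^ (p - 1) * K ≤ p * (p * K + 1)⁻¹ * K := by
          exact mul_le_mul_of_nonneg_right
            (mul_le_mul_of_nonneg_left hlam₀le (by linarith)) hK0
      _ = (p * K) / (p * K + 1) := by rw [div_eq_mul_inv]; ring
      _ < 1 := by
          rw [div_lt_one (by positivity)]
          linarith
  intro lam hlam _hlamle u₀ hu₀m hu₀b u₁ u₂ h1m h2m h1b h2b x t ht
  set M : ℝ := linftyDist n u₁ u₂ with hM_def
  have hM0 : 0 ≤ M := ENNReal.toReal_nonneg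
  set c₀ : ℝ := (4 * Real.pi * δ) ^ (-(n : ℝ) / 2) with hc₀_def
  have hc₀0 : 0 < c₀ := Real.rpow_pos_of_pos (by positivity) _
  -- essSup machinery
  have hS : MeasurableSet {q : EuclideanSpace ℝ (Fin n) × ℝ | 0 ≤ q.2} :=
    measurableSet_le measurable_const measurable_snd
  have hbdd : essSup
      (fun q : EuclideanSpace ℝ (Fin n) × ℝ => ENNReal.ofReal |u₁ q.1 q.2 - u₂ q.1 q.2|)
      (volume.restrict {q : EuclideanSpace ℝ (Fin n) × ℝ | 0 ≤ q.2}) ≠ ⊤ := by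
    refine ne_top_of_le_ne_top (ENNReal.ofReal_ne_top (r := lam * c₀))
      (essSup_le_of_ae_le _ ?_)
    filter_upwards [ae_restrict_mem hS] with q hq
    rcases h1b q.1 q.2 hq with ⟨h10, h11⟩
    rcases h2b q.1 q.2 hq with ⟨h20, h21⟩
    apply ENNReal.ofReal_le_ofReal
    have hq' : (0:ℝ) ≤ q.2 := hq
    have hk1 : heatKernel n (q.2 + δ) (q.1 - x₀) ≤ c₀ :=
      heatKernel_le' hδ0 (by linarith) _
    have b1 : u₁ q.1 q.2 ≤ lam * c₀ := h11.trans (mul_le_mul_of_nonneg_left hk1 hlam.le)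
    have b2 : u₂ q.1 q.2 ≤ lam * c₀ := h21.trans (mul_le_mul_of_nonneg_left hk1 hlam.le)
    exact abs_le.mpr ⟨by linarith, by linarith⟩
  have haeM : ∀ᵐ s ∂(volume.restrict (Set.Ici (0:ℝ))),
      ∀ᵐ y : EuclideanSpace ℝ (Fin n) ∂volume, |u₁ y s - u₂ y s| ≤ M := by
    have h1 : ∀ᵐ q : EuclideanSpace ℝ (Fin n) × ℝ
        ∂(volume.restrict {q : EuclideanSpace ℝ (Fin n) × ℝ | 0 ≤ q.2}),
        |u₁ q.1 q.2 - u₂ q.1 q.2| ≤ M := by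
      filter_upwards [ENNReal.ae_le_essSup
        (fun q : EuclideanSpace ℝ (Fin n) × ℝ => ENNReal.ofReal |u₁ q.1 q.2 - u₂ q.1 q.2|)]
        with q hq
      have h2 := ENNReal.toReal_mono hbdd hq
      rwa [ENNReal.toReal_ofReal (abs_nonneg _)] at h2
    have hset : {q : EuclideanSpace ℝ (Fin n) × ℝ | 0 ≤ q.2}
        = Set.univ ×ˢ Set.Ici (0:ℝ) := by
      ext q
      simp [Set.mem_prod]
    rw [hset] at h1
    have h2 : (volume : Measure (EuclideanSpace ℝ (Fin n) × ℝ)).restrict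
        (Set.univ ×ˢ Set.Ici (0:ℝ))
        = ((volume : Measure (EuclideanSpace ℝ (Fin n))).prod
            (volume.restrict (Set.Ici (0:ℝ)))) := by
      rw [Measure.volume_eq_prod, ← Measure.prod_restrict, Measure.restrict_univ]
    rw [h2] at h1
    have h3 : ∀ᵐ q : ℝ × EuclideanSpace ℝ (Fin n)
        ∂((volume.restrict (Set.Ici (0:ℝ))).prod (volume : Measure (EuclideanSpace ℝ (Fin n)))),
        |u₁ q.2 q.1 - u₂ q.2 q.1| ≤ M :=
      Measure.measurePreserving_swap.quasiMeasurePreserving.ae h1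
    exact Measure.ae_ae_of_ae_prod h3
  have haeM' : ∀ᵐ s ∂(volume.restrict (Set.Ioc (0:ℝ) t)),
      ∀ᵐ y : EuclideanSpace ℝ (Fin n) ∂volume, |u₁ y s - u₂ y s| ≤ M :=
    ae_restrict_of_ae_restrict_of_subset (fun s hs => le_of_lt hs.1) haeM
  have hmemIoo : ∀ᵐ s ∂(volume.restrict (Set.Ioc (0:ℝ) t)), s ∈ Set.Ioo (0:ℝ) t := by
    rw [← Measure.restrict_congr_set Ioo_ae_eq_Ioc]
    exact ae_restrict_mem measurableSet_Ioo
  -- base facts per s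
  have hbase : ∀ u : EuclideanSpace ℝ (Fin n) → ℝ → ℝ,
      (Measurable fun q : EuclideanSpace ℝ (Fin n) × ℝ => u q.1 q.2) →
      (∀ y, ∀ s : ℝ, 0 ≤ s → 0 ≤ u y s ∧ u y s ≤ lam * heatKernel n (s + δ) (y - x₀)) →
      ∀ s ∈ Set.Ioo (0:ℝ) t,
        Integrable (fun y => heatKernel n (t - s) (x - y) * u y s ^ p) ∧
        0 ≤ (∫ y, heatKernel n (t - s) (x - y) * u y s ^ p) ∧
        (∫ y, heatKernel n (t - s) (x - y) * u y s ^ p) ≤ (lam * c₀) ^ p := by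
    intro u hum hub s hs
    have hr : 0 < t - s := by linarith [hs.2]
    have hGint := integrable_heatKernel_sub (n := n) hr x
    have hG0 : ∀ y, 0 ≤ heatKernel n (t - s) (x - y) := fun y => heatKernel_nonneg hr _
    have hup : ∀ y, 0 ≤ u y s ∧ u y s ^ p ≤ (lam * c₀) ^ p := by
      intro y
      rcases hub y s (le_of_lt hs.1) with ⟨h0, h1⟩
      have hk : heatKernel n (s + δ) (y - x₀) ≤ c₀ := heatKernel_le' hδ0 (by linarith [hs.1]) _
      have h2 : u y s ≤ lam * c₀ := h1.trans (mul_le_mul_of_nonneg_left hk hlam.le)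
      exact ⟨h0, Real.rpow_le_rpow h0 h2 (by linarith)⟩
    have humeas : Measurable (fun y => heatKernel n (t - s) (x - y) * u y s ^ p) := by
      apply Measurable.mul
      · exact measurable_heatKernel2.comp
          (measurable_const.prodMk (measurable_const.sub measurable_id))
      · exact (hum.comp (measurable_id.prodMk measurable_const)).pow measurable_const
    have hint : Integrable (fun y => heatKernel n (t - s) (x - y) * u y s ^ p) := by
      refine Integrable.mono (hGint.mul_const ((lam * c₀) ^ p))
        humeas.aestronglyMeasurable ?_
      refine Filter.Eventually.of_forall fun y => ?_
      rw [Real.norm_eq_abs, Real.norm_eq_abs,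
        abs_of_nonneg (mul_nonneg (hG0 y) (Real.rpow_nonneg (hup y).1 _)),
        abs_of_nonneg (mul_nonneg (hG0 y)
          (Real.rpow_nonneg (mul_nonneg hlam.le hc₀0.le) _))]
      exact mul_le_mul_of_nonneg_left (hup y).2 (hG0 y)
    refine ⟨hint, integral_nonneg fun y => mul_nonneg (hG0 y)
      (Real.rpow_nonneg (hup y).1 _), ?_⟩
    calc (∫ y, heatKernel n (t - s) (x - y) * u y s ^ p)
        ≤ ∫ y, heatKernel n (t - s) (x - y) * (lam * c₀) ^ p :=
          integral_mono hint (hGint.mul_const _)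
            (fun y => mul_le_mul_of_nonneg_left (hup y).2 (hG0 y))
      _ = (lam * c₀) ^ p := by
          rw [integral_mul_const, integral_heatKernel hr, one_mul]
  have hk1 := hbase u₁ h1m h1b
  have hk2 := hbase u₂ h2m h2b
  -- F measurability and integrability
  have hFm : ∀ u : EuclideanSpace ℝ (Fin n) → ℝ → ℝ,
      (Measurable fun q : EuclideanSpace ℝ (Fin n) × ℝ => u q.1 q.2) →
      StronglyMeasurable (fun s : ℝ => ∫ y, heatKernel n (t - s) (x - y) * u y s ^ p) := by
    intro u hum
    have hH : Measurable (fun q : ℝ × EuclideanSpace ℝ (Fin n) =>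
        heatKernel n (t - q.1) (x - q.2) * u q.2 q.1 ^ p) := by
      apply Measurable.mul
      · exact measurable_heatKernel2.comp
          ((measurable_const.sub measurable_fst).prodMk (measurable_const.sub measurable_snd))
      · exact (hum.comp measurable_swap).pow measurable_const
    exact hH.stronglyMeasurable.integral_prod_right'
  have hFint : ∀ u : EuclideanSpace ℝ (Fin n) → ℝ → ℝ,
      (Measurable fun q : EuclideanSpace ℝ (Fin n) × ℝ => u q.1 q.2) →
      (∀ y, ∀ s : ℝ, 0 ≤ s → 0 ≤ u y s ∧ u y s ≤ lam * heatKernel n (s + δ) (y - x₀)) →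
      IntegrableOn (fun s : ℝ => ∫ y, heatKernel n (t - s) (x - y) * u y s ^ p)
        (Set.Ioc (0:ℝ) t) := by
    intro u hum hub
    refine Measure.integrableOn_of_bounded (M := (lam * c₀) ^ p)
      (by rw [Real.volume_Ioc]; exact ENNReal.ofReal_ne_top)
      (hFm u hum).aestronglyMeasurable ?_
    filter_upwards [hmemIoo] with s hs
    rcases hbase u hum hub s hs with ⟨_, hnn, hub'⟩
    rw [Real.norm_eq_abs, abs_of_nonneg hnn]
    exact hub'
  have hIoc1 := hFint u₁ h1m h1b
  have hIoc2 := hFint u₂ h2m h2b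
  -- per-s bound on the difference
  have hbound : ∀ᵐ s ∂(volume.restrict (Set.Ioc (0:ℝ) t)),
      ‖(∫ y, heatKernel n (t - s) (x - y) * u₁ y s ^ p)
        - ∫ y, heatKernel n (t - s) (x - y) * u₂ y s ^ p‖
      ≤ p * lam ^ (p - 1) * M * ((4 * Real.pi * (s + δ)) ^ (-(n : ℝ) * (p - 1) / 2)) := by
    filter_upwards [hmemIoo, haeM'] with s hs hy
    have hr : 0 < t - s := by linarith [hs.2]
    have hsδ : 0 < s + δ := by linarith [hs.1]
    set cs : ℝ := (4 * Real.pi * (s + δ)) ^ (-(n : ℝ) / 2) with hcs_def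
    have hcs0 : 0 < cs := Real.rpow_pos_of_pos (by positivity) _
    have hI1 := (hk1 s hs).1
    have hI2 := (hk2 s hs).1
    rw [← integral_sub hI1 hI2]
    have hGint := integrable_heatKernel_sub (n := n) hr x
    have hle : ∀ᵐ y : EuclideanSpace ℝ (Fin n) ∂volume,
        ‖heatKernel n (t - s) (x - y) * u₁ y s ^ p
          - heatKernel n (t - s) (x - y) * u₂ y s ^ p‖
        ≤ heatKernel n (t - s) (x - y) * (p * (lam * cs) ^ (p - 1) * M) := by
      filter_upwards [hy] with y hyM
      rcases h1b y s (le_of_lt hs.1) with ⟨h10, h11⟩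
      rcases h2b y s (le_of_lt hs.1) with ⟨h20, h21⟩
      have hk : heatKernel n (s + δ) (y - x₀) ≤ cs := heatKernel_le hsδ _
      have hmax : max (u₁ y s) (u₂ y s) ≤ lam * cs :=
        max_le (h11.trans (mul_le_mul_of_nonneg_left hk hlam.le))
          (h21.trans (mul_le_mul_of_nonneg_left hk hlam.le))
      have hstep : |u₁ y s ^ p - u₂ y s ^ p| ≤ p * (lam * cs) ^ (p - 1) * M := by
        refine (abs_rpow_sub_rpow_le hp1.le h10 h20).trans ?_
        have h1' : max (u₁ y s) (u₂ y s) ^ (p - 1) ≤ (lam * cs) ^ (p - 1) :=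
          Real.rpow_le_rpow (le_trans h10 (le_max_left _ _)) hmax (by linarith)
        have h2' : 0 ≤ p * (lam * cs) ^ (p - 1) :=
          mul_nonneg (by linarith) (Real.rpow_nonneg (mul_nonneg hlam.le hcs0.le) _)
        exact mul_le_mul (mul_le_mul_of_nonneg_left h1' (by linarith)) hyM (abs_nonneg _) h2'
      rw [Real.norm_eq_abs, ← mul_sub, abs_mul, abs_of_nonneg (heatKernel_nonneg hr _)]
      exact mul_le_mul_of_nonneg_left hstep (heatKernel_nonneg hr _)
    refine (norm_integral_le_of_norm_le (hGint.mul_const _) hle).trans ?_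
    rw [integral_mul_const, integral_heatKernel hr, one_mul]
    have hcspow : cs ^ (p - 1) = (4 * Real.pi * (s + δ)) ^ (-(n : ℝ) * (p - 1) / 2) := by
      rw [hcs_def, ← Real.rpow_mul (by positivity)]
      congr 1
      ring
    rw [Real.mul_rpow hlam.le hcs0.le, hcspow]
    apply le_of_eq
    ring
  -- bound function integrable
  have hCfIoi : IntegrableOn (fun s : ℝ => p * lam ^ (p - 1) * M
      * ((4 * Real.pi * (s + δ)) ^ (-(n : ℝ) * (p - 1) / 2))) (Set.Ioi (0:ℝ)) :=
    hKint.const_mul _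
  have hCfIoc : IntegrableOn (fun s : ℝ => p * lam ^ (p - 1) * M
      * ((4 * Real.pi * (s + δ)) ^ (-(n : ℝ) * (p - 1) / 2))) (Set.Ioc (0:ℝ) t) :=
    hCfIoi.mono_set Set.Ioc_subset_Ioi_self
  -- assemble
  have hgoal : |duhamelOp n p u₀ u₁ x t - duhamelOp n p u₀ u₂ x t|
      = |(∫ s in Set.Ioc (0:ℝ) t, ∫ y, heatKernel n (t - s) (x - y) * u₁ y s ^ p)
        - ∫ s in Set.Ioc (0:ℝ) t, ∫ y, heatKernel n (t - s) (x - y) * u₂ y s ^ p| := by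
    unfold duhamelOp
    rw [intervalIntegral.integral_of_le ht, intervalIntegral.integral_of_le ht]
    congr 1
    ring
  rw [hgoal]
  have hmain : |(∫ s in Set.Ioc (0:ℝ) t, ∫ y, heatKernel n (t - s) (x - y) * u₁ y s ^ p)
      - ∫ s in Set.Ioc (0:ℝ) t, ∫ y, heatKernel n (t - s) (x - y) * u₂ y s ^ p|
      ≤ ∫ s in Set.Ioc (0:ℝ) t, p * lam ^ (p - 1) * M
          * ((4 * Real.pi * (s + δ)) ^ (-(n : ℝ) * (p - 1) / 2)) := by
    rw [← integral_sub hIoc1 hIoc2]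
    have h := norm_integral_le_of_norm_le hCfIoc hbound
    simpa [Real.norm_eq_abs] using h
  refine hmain.trans ?_
  have hmono : (∫ s in Set.Ioc (0:ℝ) t, p * lam ^ (p - 1) * M
        * ((4 * Real.pi * (s + δ)) ^ (-(n : ℝ) * (p - 1) / 2)))
      ≤ ∫ s in Set.Ioi (0:ℝ), p * lam ^ (p - 1) * M
        * ((4 * Real.pi * (s + δ)) ^ (-(n : ℝ) * (p - 1) / 2)) := by
    refine setIntegral_mono_set hCfIoi ?_
      (HasSubset.Subset.eventuallyLE Set.Ioc_subset_Ioi_self)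
    filter_upwards [ae_restrict_mem measurableSet_Ioi] with s hs
    rw [Set.mem_Ioi] at hs
    have h0 : (0:ℝ) ≤ p * lam ^ (p - 1) * M :=
      mul_nonneg (mul_nonneg (by linarith) (Real.rpow_nonneg hlam.le _)) hM0
    exact mul_nonneg h0 (Real.rpow_nonneg (by nlinarith) _)
  refine hmono.trans ?_
  rw [integral_const_mul]
  apply le_of_eq
  ring
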